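/- For every positive integer m and every complex number s, one has the identity K_{1,1}(m, −s) · m^{−s} = K_{2,2}(m, s). -/

import Mathlib

noncomputable section

open Complex Finset MeasureTheory

namespace EpsteinPaper

/-- `d` is a fundamental discriminant. -/
def IsFundDisc (d : ℤ) : Prop :=
  (d % 4 = 1 ∧ Squarefree d) ∨
  (d % 4 = 0 ∧ Squarefree (d / 4) ∧ (d / 4 % 4 = 2 ∨ d / 4 % 4 = 3))

/-- Generalized binomial coefficient `z choose k`. -/
def gchoose (z : ℂ) (k : ℕ) : ℂ := (∏ i ∈ Finset.range k, (z - (i : ℂ))) / (k.factorial : ℂ)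

/-- `τ_k(m)`: the number of ordered `k`-tuples of positive integers with product `m`. -/
def tauk (k m : ℕ) : ℕ := Nat.card {f : Fin k → ℕ // ∏ i, f i = m}

/-- `τ(m)`: the number of divisors of `m`. -/
def tau (m : ℕ) : ℕ := m.divisors.card

/-- `(m, d^∞)`: the largest divisor of `m` supported on primes dividing `d`. -/
def corad (m d : ℕ) : ℕ :=
  ∏ p ∈ m.primeFactors.filter (fun p => p ∣ d), p ^ (m.factorization p)

/-- `G_N = ∏_{p | N} (1 + p^{-3/4})²`. -/
def GNfac (N : ℕ) : ℝ := ∏ p ∈ N.primeFactors, (1 + (p : ℝ) ^ (-(3 / 4 : ℝ))) ^ 2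

/-- The data of the paper: two moduli together with Dirichlet characters on them. -/
structure Ctx where
  d₁ : ℕ
  d₂ : ℕ
  χ₁ : DirichletCharacter ℂ d₁
  χ₂ : DirichletCharacter ℂ d₂

namespace Ctx

/-- `D = d₁ d₂`. -/
def D (P : Ctx) : ℕ := P.d₁ * P.d₂

/-- Swapping the roles of the two characters. -/
def swap (P : Ctx) : Ctx := ⟨P.d₂, P.d₁, P.χ₂, P.χ₁⟩

/-- The standing hypotheses: `d₁, d₂` are positive and coprime, `-D` is a fundamental
discriminant, and `χ₁, χ₂` are real primitive Dirichlet characters. -/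
def Good (P : Ctx) : Prop :=
  0 < P.d₁ ∧ 0 < P.d₂ ∧ Nat.Coprime P.d₁ P.d₂ ∧
  IsFundDisc (-(P.D : ℤ)) ∧
  P.χ₁.IsPrimitive ∧ P.χ₂.IsPrimitive ∧
  (∀ a : ZMod P.d₁, star (P.χ₁ a) = P.χ₁ a) ∧
  (∀ a : ZMod P.d₂, star (P.χ₂ a) = P.χ₂ a)

/-- `χ_D(n) = χ_{d₁}(n) χ_{d₂}(n)` as a function on `ℕ`. -/
def chiD (P : Ctx) (n : ℕ) : ℂ := P.χ₁ (n : ZMod P.d₁) * P.χ₂ (n : ZMod P.d₂)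

/-- `χ_D` as a Dirichlet character modulo `D = d₁ d₂`. -/
def chiDchar (P : Ctx) : DirichletCharacter ℂ (P.d₁ * P.d₂) :=
  (DirichletCharacter.changeLevel (dvd_mul_right P.d₁ P.d₂) P.χ₁) *
  (DirichletCharacter.changeLevel (dvd_mul_left P.d₂ P.d₁) P.χ₂)

/-- `r(n) = Σ_{ab=n} χ_{d₁}(a) χ_{d₂}(b)`. -/
def r (P : Ctx) (n : ℕ) : ℂ :=
  ∑ p ∈ n.divisorsAntidiagonal, P.χ₁ (p.1 : ZMod P.d₁) * P.χ₂ (p.2 : ZMod P.d₂)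

/-- `α` is the multiplicative function whose generating series at each prime `p` is
`((1 - χ_{d₁}(p) x) (1 - χ_{d₂}(p) x))^{1/2}` (principal binomial series); equivalently
`Σ α(ν) ν^{-s} = (L(s,χ_{d₁}) L(s,χ_{d₂}))^{-1/2}` for `Re s > 1`. -/
def IsAlpha (P : Ctx) (α : ℕ → ℂ) : Prop :=
  α 1 = 1 ∧
  (∀ m n : ℕ, Nat.Coprime m n → α (m * n) = α m * α n) ∧
  (∀ p : ℕ, p.Prime → ∀ k : ℕ, α (p ^ k) =
    ∑ ij ∈ Finset.HasAntidiagonal.antidiagonal k,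
      gchoose (1 / 2) ij.1 * (-(P.χ₁ (p : ZMod P.d₁))) ^ ij.1 *
        (gchoose (1 / 2) ij.2 * (-(P.χ₂ (p : ZMod P.d₂))) ^ ij.2))

end Ctx

/-- The smoothing weight `𝓛(ν)`. -/
def LL (X : ℝ) (ν : ℕ) : ℝ :=
  if (ν : ℝ) < Real.sqrt X then 1
  else if (ν : ℝ) ≤ X then 2 * Real.log (X / (ν : ℝ)) / Real.log X
  else 0

/-- `β(ν) = α(ν) 𝓛(ν)`. -/
def betaf (α : ℕ → ℂ) (X : ℝ) (ν : ℕ) : ℂ := α ν * ((LL X ν : ℝ) : ℂ)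

/-- The mollifier `η(s) = Σ_{ν ≤ X} β(ν) ν^{-s}`. -/
def eta (α : ℕ → ℂ) (X : ℝ) (s : ℂ) : ℂ :=
  ∑ ν ∈ Finset.Icc 1 ⌊X⌋₊, betaf α X ν * (ν : ℂ) ^ (-s)

namespace Ctx

/-- `L(s) = L(s, χ_{d₁}) L(s, χ_{d₂})`. -/
def Lfun (P : Ctx) [NeZero P.d₁] [NeZero P.d₂] (s : ℂ) : ℂ :=
  P.χ₁.LFunction s * P.χ₂.LFunction s

/-- `F(t) = (2π/√D)^{-(1/2+it)} Γ(1/2+it) L(1/2+it) |η(1/2+it)|² e^{(π/2 - 1/T) t}`. -/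
def Ffun (P : Ctx) [NeZero P.d₁] [NeZero P.d₂] (α : ℕ → ℂ) (T X : ℝ) (t : ℝ) : ℂ :=
  (((2 * Real.pi / Real.sqrt (P.D : ℝ) : ℝ)) : ℂ) ^ (-(1 / 2 + Complex.I * (t : ℂ))) *
  Complex.Gamma (1 / 2 + Complex.I * (t : ℂ)) *
  P.Lfun (1 / 2 + Complex.I * (t : ℂ)) *
  ((‖eta α X (1 / 2 + Complex.I * (t : ℂ))‖ ^ 2 : ℝ) : ℂ) *
  ((Real.exp ((Real.pi / 2 - 1 / T) * t) : ℝ) : ℂ)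

/-- `I(t, H) = ∫_t^{t+H} F(u) du`. -/
def Ifun (P : Ctx) [NeZero P.d₁] [NeZero P.d₂] (α : ℕ → ℂ) (T X t H : ℝ) : ℂ :=
  ∫ u in t..(t + H), P.Ffun α T X u

/-- The function `G(y)` (with `δ = 1/T`). -/
def Gfun (P : Ctx) (α : ℕ → ℂ) (T X : ℝ) (y : ℝ) : ℝ :=
  (‖(∑ ν₁ ∈ Finset.Icc 1 ⌊X⌋₊, ∑ ν₂ ∈ Finset.Icc 1 ⌊X⌋₊,
    betaf α X ν₁ * betaf α X ν₂ / (ν₂ : ℂ) *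
    ∑' n : ℕ, P.r n *
      Complex.exp (-(((2 * Real.pi * (n : ℝ) * (ν₁ : ℝ) /
          (Real.sqrt (P.D : ℝ) * (ν₂ : ℝ)) * y : ℝ)) : ℂ) *
        (((Real.sin (1 / T) : ℝ) : ℂ) + Complex.I * ((Real.cos (1 / T) : ℝ) : ℂ))))‖) ^ 2

/-- `J(x, θ) = ∫_x^∞ G(u) u^{-θ} du`. -/
def Jfun (P : Ctx) (α : ℕ → ℂ) (T X θ x : ℝ) : ℝ :=
  ∫ u in Set.Ioi x, P.Gfun α T X u * u ^ (-θ)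

/-- The Euler-factor function `K(m, s)`. -/
def Kf (P : Ctx) (m : ℕ) (s : ℂ) : ℂ :=
  ∏ p ∈ m.primeFactors,
    ((∑' k : ℕ, (P.r (p ^ k)) ^ 2 * (p : ℂ) ^ (-(k : ℂ) * s))⁻¹ *
     (∑' k : ℕ, P.r (p ^ (m.factorization p + k)) * P.r (p ^ k) * (p : ℂ) ^ (-(k : ℂ) * s)))

/-- `K_{l,l}(m, z)` in its "sum" form (an entire function of `z`); the case `l = 1`.  The case
`l = 2` is obtained by applying this to `P.swap`. -/
def KllS (P : Ctx) (m : ℕ) (z : ℂ) : ℂ :=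
  ((corad m P.d₁ : ℕ) : ℂ) ^ (-z) *
  P.χ₁ ((corad m P.d₂ : ℕ) : ZMod P.d₁) * P.χ₂ ((corad m P.d₁ : ℕ) : ZMod P.d₂) *
  ∏ p ∈ m.primeFactors.filter (fun p => ¬ p ∣ P.D),
    (1 + P.chiD p / (p : ℂ))⁻¹ * (P.χ₁ (p : ZMod P.d₁)) ^ (m.factorization p) *
    ((∑ j ∈ Finset.range (m.factorization p + 1), P.chiD (p ^ j) * (p : ℂ) ^ (-(j : ℂ) * z)) -
      (p : ℂ) ^ (-(z + 1)) *
        ∑ j ∈ Finset.range (m.factorization p - 1), P.chiD (p ^ j) * (p : ℂ) ^ (-(j : ℂ) * z))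

/-- `K_{l,l}(m, z)` in its original "product" form; the case `l = 1`. -/
def KllP (P : Ctx) (m : ℕ) (z : ℂ) : ℂ :=
  ((corad m P.d₁ : ℕ) : ℂ) ^ (-z) *
  P.χ₁ ((corad m P.d₂ : ℕ) : ZMod P.d₁) * P.χ₂ ((corad m P.d₁ : ℕ) : ZMod P.d₂) *
  ∏ p ∈ m.primeFactors.filter (fun p => ¬ p ∣ P.D),
    (1 - (p : ℂ) ^ (-(2 : ℂ)))⁻¹ * (1 - P.chiD p * (p : ℂ) ^ (-z))⁻¹ * (1 - P.chiD p / (p : ℂ)) *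
    (P.χ₁ (p : ZMod P.d₁)) ^ (m.factorization p) *
    (1 - (p : ℂ) ^ (-(z + 1)) +
      P.chiD (p ^ (m.factorization p + 1)) *
        (p : ℂ) ^ (-((m.factorization p : ℂ) * z + 1)) * (1 - (p : ℂ) ^ (-(z - 1))))

/-- `K_{l,l}` for `l ∈ {1, 2}` (sum form). -/
def Kl (P : Ctx) (l : Fin 2) : ℕ → ℂ → ℂ :=
  if l = 0 then P.KllS else P.swap.KllS

/-- `K_{1,2}(m₁, m₂, z)`. -/
def K12 (P : Ctx) (m₁ m₂ : ℕ) (z : ℂ) : ℂ :=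
  P.χ₁ (m₁ : ZMod P.d₁) * P.χ₂ (m₂ : ZMod P.d₂) *
  (∑ q ∈ (corad (m₁ * m₂ / P.D) P.D).divisors, (q : ℂ) ^ (-z)) *
  ∏ p ∈ (m₁ * m₂).primeFactors.filter (fun p => ¬ p ∣ P.D),
    (1 + P.chiD p / (p : ℂ))⁻¹ *
    ((∑ j ∈ Finset.range ((m₁ * m₂).factorization p + 1), (p : ℂ) ^ (-(j : ℂ) * z)) -
      P.chiD p * (p : ℂ) ^ (-(z + 1)) *
        ∑ j ∈ Finset.range ((m₁ * m₂).factorization p - 1), (p : ℂ) ^ (-(j : ℂ) * z))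

end Ctx

/-- The Gauss sum `G(χ) = Σ_{x mod d} χ(x) e^{2πi x/d}`. -/
def gaussS (d : ℕ) (χ : DirichletCharacter ℂ d) : ℂ :=
  ∑ x ∈ Finset.range d, χ (x : ZMod d) * Complex.exp (2 * (Real.pi : ℂ) * Complex.I * (x : ℂ) / (d : ℂ))

/-- `χ(x / y)`, with the convention that this is `0` when `y ∤ x`. -/
def chiAt (d : ℕ) (χ : DirichletCharacter ℂ d) (x y : ℕ) : ℂ :=
  if y ∣ x then χ ((x / y : ℕ) : ZMod d) else 0

namespace Ctx

/-- The exponential sum `ε_q(l)`. -/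
def epsq (P : Ctx) (m₁ m₂ l q : ℕ) : ℂ :=
  ∑ a ∈ (Finset.range q).filter (fun a => Nat.Coprime a q),
    Complex.exp (-(2 * (Real.pi : ℂ) * Complex.I * (a : ℂ) * (l : ℂ)) / (q : ℂ)) *
    (gaussS P.d₁ P.χ₁ / ((Real.sqrt (P.d₁ : ℝ) : ℝ) : ℂ) *
        P.χ₁ ((a * (m₁ / Nat.gcd m₁ q) : ℕ) : ZMod P.d₁) *
        chiAt P.d₂ P.χ₂ (q / Nat.gcd q m₁) P.d₁ +
      gaussS P.d₂ P.χ₂ / ((Real.sqrt (P.d₂ : ℝ) : ℝ) : ℂ) *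
        P.χ₂ ((a * (m₁ / Nat.gcd m₁ q) : ℕ) : ZMod P.d₂) *
        chiAt P.d₁ P.χ₁ (q / Nat.gcd q m₁) P.d₂) *
    ((starRingEnd ℂ) (gaussS P.d₁ P.χ₁) / ((Real.sqrt (P.d₁ : ℝ) : ℝ) : ℂ) *
        P.χ₁ ((a * (m₂ / Nat.gcd m₂ q) : ℕ) : ZMod P.d₁) *
        chiAt P.d₂ P.χ₂ (q / Nat.gcd q m₂) P.d₁ +
      (starRingEnd ℂ) (gaussS P.d₂ P.χ₂) / ((Real.sqrt (P.d₂ : ℝ) : ℝ) : ℂ) *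
        P.χ₂ ((a * (m₂ / Nat.gcd m₂ q) : ℕ) : ZMod P.d₂) *
        chiAt P.d₁ P.χ₁ (q / Nat.gcd q m₂) P.d₂)

/-- The `q`-th term of the singular series `σ(l, m₁, m₂)`. -/
def sigTerm (P : Ctx) (m₁ m₂ l q : ℕ) : ℂ :=
  P.epsq m₁ m₂ l q * ((Nat.gcd q (m₁ * m₂) : ℕ) : ℂ) /
    ((q : ℂ) ^ 2 *
      ((Real.sqrt (((P.D / Nat.gcd (q / Nat.gcd q m₁) P.D) *
          (P.D / Nat.gcd (q / Nat.gcd q m₂) P.D) : ℕ) : ℝ) : ℝ) : ℂ))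

/-- The singular series `σ(l, m₁, m₂) = Σ_{q ≥ 1} ε_q(l) (q, m₁m₂) / (q² √(r₁ r₂))`. -/
def sigmaS (P : Ctx) (m₁ m₂ l : ℕ) : ℂ :=
  ∑' q : ℕ, if q = 0 then 0 else P.sigTerm m₁ m₂ l q

/-- The shifted-convolution Dirichlet series `D_{m₁,m₂}(s, l)`. -/
def Dser (P : Ctx) (m₁ m₂ l : ℕ) (s : ℂ) : ℂ :=
  ∑' n : ℕ, (if m₂ ∣ (m₁ * n + l) then P.r ((m₁ * n + l) / m₂) else 0) * P.r n *
    ((m₁ : ℂ) * (n : ℂ) + (l : ℂ) / 2) ^ (-s)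

/-- The fourfold Selberg sum `S(z)` built from `K`. -/
def Ssum (P : Ctx) (α : ℕ → ℂ) (X : ℝ) (z : ℂ) : ℂ :=
  ∑ ν₁ ∈ Finset.Icc 1 ⌊X⌋₊, ∑ ν₂ ∈ Finset.Icc 1 ⌊X⌋₊,
    ∑ ν₃ ∈ Finset.Icc 1 ⌊X⌋₊, ∑ ν₄ ∈ Finset.Icc 1 ⌊X⌋₊,
      betaf α X ν₁ * betaf α X ν₂ * betaf α X ν₃ * betaf α X ν₄ / ((ν₂ : ℂ) * (ν₄ : ℂ)) *
      (((Nat.gcd (ν₁ * ν₄) (ν₂ * ν₃) : ℕ) : ℂ) / ((ν₁ : ℂ) * (ν₃ : ℂ))) ^ ((1 : ℂ) - z) *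
      P.Kf ((ν₁ * ν₄) / Nat.gcd (ν₁ * ν₄) (ν₂ * ν₃)) (1 - z) *
      P.Kf ((ν₂ * ν₃) / Nat.gcd (ν₁ * ν₄) (ν₂ * ν₃)) (1 - z)

/-- The fourfold Selberg sum `S_{l,l}(z)` built from `K_{l,l}`. -/
def Sll (P : Ctx) (α : ℕ → ℂ) (l : Fin 2) (X : ℝ) (z : ℂ) : ℂ :=
  ∑ ν₁ ∈ Finset.Icc 1 ⌊X⌋₊, ∑ ν₂ ∈ Finset.Icc 1 ⌊X⌋₊,
    ∑ ν₃ ∈ Finset.Icc 1 ⌊X⌋₊, ∑ ν₄ ∈ Finset.Icc 1 ⌊X⌋₊,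
      betaf α X ν₁ * betaf α X ν₂ * betaf α X ν₃ * betaf α X ν₄ / ((ν₂ : ℂ) * (ν₄ : ℂ)) *
      (((Nat.gcd (ν₁ * ν₄) (ν₂ * ν₃) : ℕ) : ℂ) / ((ν₁ : ℂ) * (ν₃ : ℂ))) ^ ((1 : ℂ) - z) *
      P.Kl l ((ν₁ * ν₄) / Nat.gcd (ν₁ * ν₄) (ν₂ * ν₃)) z *
      P.Kl l ((ν₂ * ν₃) / Nat.gcd (ν₁ * ν₄) (ν₂ * ν₃)) z

/-- The sum `S_z(X₁, γ, N)` built from `K`. -/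
def SzK (P : Ctx) (α : ℕ → ℂ) (X₁ : ℝ) (γ z : ℂ) (N : ℕ) : ℂ :=
  ∑ ν ∈ (Finset.Icc 1 ⌊X₁⌋₊).filter (fun ν => Nat.Coprime ν N),
    α ν * P.Kf ν (1 - z) * (ν : ℂ) ^ (γ - 1) * ((Real.log (X₁ / (ν : ℝ)) : ℝ) : ℂ)

/-- The sum `S_z^{(l,l)}(X₁, γ, N)` built from `K_{l,l}`. -/
def SzKll (P : Ctx) (α : ℕ → ℂ) (l : Fin 2) (X₁ : ℝ) (γ z : ℂ) (N : ℕ) : ℂ :=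
  ∑ ν ∈ (Finset.Icc 1 ⌊X₁⌋₊).filter (fun ν => Nat.Coprime ν N),
    α ν * P.Kl l ν z * (ν : ℂ) ^ (γ - 1) * ((Real.log (X₁ / (ν : ℝ)) : ℝ) : ℂ)

/-- The number of units in the ring of integers of `ℚ(√-D)`. -/
def unitsD (P : Ctx) : ℝ := if P.D = 3 then 6 else if P.D = 4 then 4 else 2

/-- `h` is the class number of `ℚ(√-D)`, characterized by Dirichlet's class number formula
`L(1, χ_D) = 2 π h / (w √D)`. -/
def IsClassNumber (P : Ctx) [NeZero (P.d₁ * P.d₂)] (h : ℕ) : Prop :=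
  DirichletCharacter.LFunction P.chiDchar 1 =
    (((2 * Real.pi * (h : ℝ) / (P.unitsD * Real.sqrt (P.D : ℝ)) : ℝ)) : ℂ)

end Ctx

/-! ### Auxiliary lemmas for `statement_19` -/

lemma prod_natCast_cpow (t : Finset ℕ) (f : ℕ → ℕ) (z : ℂ) :
    ((∏ p ∈ t, f p : ℕ) : ℂ) ^ z = ∏ p ∈ t, ((f p : ℕ) : ℂ) ^ z := by
  induction t using Finset.cons_induction with
  | empty => simp
  | cons a t ha ih =>
      rw [Finset.prod_cons, Finset.prod_cons, ← ih, Nat.cast_mul,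
        Complex.natCast_mul_natCast_cpow]

lemma chi_sq_eq_one {d : ℕ} [NeZero d] (χ : DirichletCharacter ℂ d)
    (hreal : ∀ a : ZMod d, star (χ a) = χ a) {n : ℕ} (hn : n.Coprime d) :
    χ (n : ZMod d) ^ 2 = 1 := by
  obtain ⟨u, hu⟩ := (ZMod.isUnit_iff_coprime n d).mpr hn
  have hcard : (χ (n : ZMod d)) ^ Fintype.card (ZMod d)ˣ = 1 := by
    rw [← hu, ← map_pow, ← Units.val_pow_eq_pow_val, pow_card_eq_one, Units.val_one, map_one]
  have hre : ((χ (n : ZMod d)).re : ℂ) = χ (n : ZMod d) :=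
    Complex.conj_eq_iff_re.mp (hreal _)
  set r := (χ (n : ZMod d)).re with hr
  have h1 : r ^ Fintype.card (ZMod d)ˣ = 1 := by
    have : ((r : ℂ)) ^ Fintype.card (ZMod d)ˣ = 1 := by rw [hre]; exact hcard
    exact_mod_cast this
  have h2 : r = 1 ∨ r = -1 := by
    rcases pow_eq_one_iff_cases.mp h1 with h | h | h
    · exact absurd h Fintype.card_ne_zero
    · exact Or.inl h
    · exact Or.inr h.1
  have h3 : r ^ 2 = 1 := by rcases h2 with h | h <;> rw [h] <;> ring
  rw [← hre]
  exact_mod_cast congrArg (Complex.ofReal) h3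

lemma pow_sub_of_sq (w : ℂ) (hw : w ^ 2 = 1) {j a : ℕ} (hj : j ≤ a) :
    w ^ (a - j) = w ^ a * w ^ j := by
  have h2 : w ^ j * w ^ j = 1 := by
    rw [← pow_add, ← two_mul, pow_mul, hw, one_pow]
  have : w ^ a = w ^ (a - j) * w ^ j := by rw [← pow_add, Nat.sub_add_cancel hj]
  rw [this, mul_assoc, h2, mul_one]

lemma reflect_sum (w t : ℂ) (hw : w ^ 2 = 1) (ht : t ≠ 0) (n : ℕ) :
    ∑ j ∈ Finset.range n, w ^ j * t ^ j
      = w ^ (n - 1) * t ^ (n - 1) * ∑ j ∈ Finset.range n, w ^ j * (t⁻¹) ^ j := by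
  rw [← Finset.sum_range_reflect (fun j => w ^ j * t ^ j) n, Finset.mul_sum]
  refine Finset.sum_congr rfl fun j hj => ?_
  have hj' : j ≤ n - 1 := by have := Finset.mem_range.mp hj; omega
  rw [pow_sub_of_sq w hw hj', pow_sub₀ t ht hj', inv_pow]
  field_simp

lemma key_alg (u v t x : ℂ) (hu : u ^ 2 = 1) (hv : v ^ 2 = 1) (ht : t ≠ 0) (hx : x ≠ 0)
    {a : ℕ} (ha : 1 ≤ a) :
    (t⁻¹) ^ a * (u ^ a *
      ((∑ j ∈ Finset.range (a + 1), (u * v) ^ j * t ^ j)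
        - t * x⁻¹ * ∑ j ∈ Finset.range (a - 1), (u * v) ^ j * t ^ j))
    = v ^ a *
      ((∑ j ∈ Finset.range (a + 1), (u * v) ^ j * (t⁻¹) ^ j)
        - t⁻¹ * x⁻¹ * ∑ j ∈ Finset.range (a - 1), (u * v) ^ j * (t⁻¹) ^ j) := by
  have hw : (u * v) ^ 2 = 1 := by rw [mul_pow, hu, hv, one_mul]
  rcases Nat.lt_or_ge a 2 with h2 | h2
  · have h1 : a = 1 := by omega
    subst h1
    simp only [Nat.sub_self, Finset.range_zero, Finset.sum_empty, mul_zero, sub_zero]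
    simp only [Finset.sum_range_succ, Finset.sum_range_zero]
    rcases sq_eq_one_iff.mp hu with h | h <;> rcases sq_eq_one_iff.mp hv with h' | h' <;>
      subst h <;> subst h' <;> field_simp <;> ring
  · obtain ⟨b, rfl⟩ : ∃ b, a = b + 2 := ⟨a - 2, by omega⟩
    rw [reflect_sum _ _ hw ht (b + 2 + 1), reflect_sum _ _ hw ht (b + 2 - 1)]
    simp only [Nat.add_sub_cancel, show b + 2 - 1 - 1 = b by omega, show b + 2 - 1 = b + 1 by omega]
    set A := ∑ j ∈ Finset.range (b + 2 + 1), (u * v) ^ j * (t⁻¹) ^ j with hA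
    set B := ∑ j ∈ Finset.range (b + 1), (u * v) ^ j * (t⁻¹) ^ j with hB
    clear_value A B
    have hub : u ^ (b + 2) = u ^ b := by rw [pow_add, hu, mul_one]
    have hvb : v ^ (b + 2) = v ^ b := by rw [pow_add, hv, mul_one]
    have hwb : (u * v) ^ (b + 2) = u ^ b * v ^ b := by rw [pow_add, hw, mul_one, mul_pow]
    have hwb' : (u * v) ^ b = u ^ b * v ^ b := mul_pow u v b
    have htb : t ^ (b + 2) = t ^ b * t ^ 2 := pow_add t b 2
    have htib : (t⁻¹ : ℂ) ^ (b + 2) = (t ^ b * t ^ 2)⁻¹ := by rw [inv_pow, htb]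
    rw [hub, hvb, hwb, hwb', htb, htib]
    have hU : u ^ b = 1 ∨ u ^ b = -1 :=
      sq_eq_one_iff.mp (by rw [← pow_mul, mul_comm, pow_mul, hu, one_pow])
    have hV : v ^ b = 1 ∨ v ^ b = -1 :=
      sq_eq_one_iff.mp (by rw [← pow_mul, mul_comm, pow_mul, hv, one_pow])
    have hT : t ^ b ≠ 0 := pow_ne_zero _ ht
    generalize t ^ b = T at *
    rcases hU with h | h <;> rcases hV with h' | h' <;> rw [h, h'] <;> field_simp <;> ring

lemma assemble (c1s c1ns c2ns A B F N G : ℂ) (hcancel : c1s * c1ns = 1)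
    (hNF : N * F = G) :
    c1s * A * B * F * (c1ns * c2ns * N) = c2ns * B * A * G := by
  rw [← hNF]
  linear_combination (A * B * c2ns * N * F) * hcancel

lemma perprime (P : Ctx) [NeZero P.d₁] [NeZero P.d₂]
    (hr1 : ∀ a : ZMod P.d₁, star (P.χ₁ a) = P.χ₁ a)
    (hr2 : ∀ a : ZMod P.d₂, star (P.χ₂ a) = P.χ₂ a)
    {p : ℕ} (hp : p.Prime) (h1 : ¬ p ∣ P.d₁) (h2 : ¬ p ∣ P.d₂)
    {a : ℕ} (ha : 1 ≤ a) (s : ℂ) :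
    ((p ^ a : ℕ) : ℂ) ^ (-s) *
      ((1 + P.χ₁ (p : ZMod P.d₁) * P.χ₂ (p : ZMod P.d₂) / (p : ℂ))⁻¹ *
          P.χ₁ (p : ZMod P.d₁) ^ a *
        ((∑ j ∈ Finset.range (a + 1),
            P.χ₁ ((p ^ j : ℕ) : ZMod P.d₁) * P.χ₂ ((p ^ j : ℕ) : ZMod P.d₂) *
              (p : ℂ) ^ (-(j : ℂ) * (-s))) -
          (p : ℂ) ^ (-(-s + 1)) *
            ∑ j ∈ Finset.range (a - 1),
              P.χ₁ ((p ^ j : ℕ) : ZMod P.d₁) * P.χ₂ ((p ^ j : ℕ) : ZMod P.d₂) *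
                (p : ℂ) ^ (-(j : ℂ) * (-s))))
    = (1 + P.χ₂ (p : ZMod P.d₂) * P.χ₁ (p : ZMod P.d₁) / (p : ℂ))⁻¹ *
          P.χ₂ (p : ZMod P.d₂) ^ a *
        ((∑ j ∈ Finset.range (a + 1),
            P.χ₂ ((p ^ j : ℕ) : ZMod P.d₂) * P.χ₁ ((p ^ j : ℕ) : ZMod P.d₁) *
              (p : ℂ) ^ (-(j : ℂ) * s)) -
          (p : ℂ) ^ (-(s + 1)) *
            ∑ j ∈ Finset.range (a - 1),
              P.χ₂ ((p ^ j : ℕ) : ZMod P.d₂) * P.χ₁ ((p ^ j : ℕ) : ZMod P.d₁) *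
                (p : ℂ) ^ (-(j : ℂ) * s)) := by
  have hx : (p : ℂ) ≠ 0 := Nat.cast_ne_zero.mpr hp.pos.ne'
  set u := P.χ₁ (p : ZMod P.d₁) with hudef
  set v := P.χ₂ (p : ZMod P.d₂) with hvdef
  have hu : u ^ 2 = 1 := chi_sq_eq_one P.χ₁ hr1 (hp.coprime_iff_not_dvd.mpr h1)
  have hv : v ^ 2 = 1 := chi_sq_eq_one P.χ₂ hr2 (hp.coprime_iff_not_dvd.mpr h2)
  have ht : (p : ℂ) ^ s ≠ 0 := fun h => hx ((Complex.cpow_eq_zero_iff _ _).mp h).1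
  have hc1 : ∀ j : ℕ, P.χ₁ ((p ^ j : ℕ) : ZMod P.d₁) = u ^ j := fun j => by
    rw [Nat.cast_pow, map_pow, ← hudef]
  have hc2 : ∀ j : ℕ, P.χ₂ ((p ^ j : ℕ) : ZMod P.d₂) = v ^ j := fun j => by
    rw [Nat.cast_pow, map_pow, ← hvdef]
  have hE1 : ∀ j : ℕ, (p : ℂ) ^ (-(j : ℂ) * (-s)) = ((p : ℂ) ^ s) ^ j := fun j => by
    rw [show -(j : ℂ) * (-s) = (j : ℂ) * s by ring, Complex.cpow_nat_mul]
  have hE2 : ∀ j : ℕ, (p : ℂ) ^ (-(j : ℂ) * s) = (((p : ℂ) ^ s)⁻¹) ^ j := fun j => by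
    rw [show -(j : ℂ) * s = (j : ℂ) * (-s) by ring, Complex.cpow_nat_mul, Complex.cpow_neg]
  have hE3 : (p : ℂ) ^ (-(-s + 1)) = (p : ℂ) ^ s * ((p : ℂ))⁻¹ := by
    rw [show -(-s + 1) = s + (-1) by ring, Complex.cpow_add _ _ hx, Complex.cpow_neg_one]
  have hE4 : (p : ℂ) ^ (-(s + 1)) = ((p : ℂ) ^ s)⁻¹ * ((p : ℂ))⁻¹ := by
    rw [show -(s + 1) = -s + (-1) by ring, Complex.cpow_add _ _ hx, Complex.cpow_neg,
      Complex.cpow_neg_one]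
  have hE5 : ((p ^ a : ℕ) : ℂ) ^ (-s) = (((p : ℂ) ^ s)⁻¹) ^ a := by
    rw [Nat.cast_pow, ← Complex.natCast_cpow_natCast_mul, Complex.cpow_nat_mul, Complex.cpow_neg]
  simp only [hc1, hc2, hE1, hE2, hE3, hE4, hE5]
  have hS : ∀ (w : ℂ) (n : ℕ),
      ∑ j ∈ Finset.range n, u ^ j * v ^ j * w ^ j
        = ∑ j ∈ Finset.range n, (u * v) ^ j * w ^ j :=
    fun w n => Finset.sum_congr rfl fun j _ => by rw [mul_pow]
  have hS' : ∀ (w : ℂ) (n : ℕ),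
      ∑ j ∈ Finset.range n, v ^ j * u ^ j * w ^ j
        = ∑ j ∈ Finset.range n, (u * v) ^ j * w ^ j :=
    fun w n => Finset.sum_congr rfl fun j _ => by rw [← mul_pow, mul_comm v u]
  rw [hS ((p : ℂ) ^ s) (a + 1), hS ((p : ℂ) ^ s) (a - 1),
    hS' (((p : ℂ) ^ s)⁻¹) (a + 1), hS' (((p : ℂ) ^ s)⁻¹) (a - 1),
    show v * u = u * v from mul_comm v u]
  have hk := key_alg u v ((p : ℂ) ^ s) (p : ℂ) hu hv ht hx ha
  linear_combination (1 + u * v / (p : ℂ))⁻¹ * hk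

set_option maxHeartbeats 1600000 in
lemma main_explicit (P : Ctx) (hd1 : 0 < P.d₁) (hd2 : 0 < P.d₂)
    (hcop : Nat.Coprime P.d₁ P.d₂)
    (hr1 : ∀ a : ZMod P.d₁, star (P.χ₁ a) = P.χ₁ a)
    (hr2 : ∀ a : ZMod P.d₂, star (P.χ₂ a) = P.χ₂ a)
    (m : ℕ) (hm : 0 < m) (s : ℂ) :
    ((corad m P.d₁ : ℕ) : ℂ) ^ (-(-s)) *
      P.χ₁ ((corad m P.d₂ : ℕ) : ZMod P.d₁) * P.χ₂ ((corad m P.d₁ : ℕ) : ZMod P.d₂) *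
      (∏ p ∈ m.primeFactors.filter (fun p => ¬ p ∣ P.d₁ * P.d₂),
        (1 + P.χ₁ (p : ZMod P.d₁) * P.χ₂ (p : ZMod P.d₂) / (p : ℂ))⁻¹ *
          P.χ₁ (p : ZMod P.d₁) ^ (m.factorization p) *
          ((∑ j ∈ Finset.range (m.factorization p + 1),
              P.χ₁ ((p ^ j : ℕ) : ZMod P.d₁) * P.χ₂ ((p ^ j : ℕ) : ZMod P.d₂) *
                (p : ℂ) ^ (-(j : ℂ) * (-s))) -
            (p : ℂ) ^ (-(-s + 1)) *
              ∑ j ∈ Finset.range (m.factorization p - 1),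
                P.χ₁ ((p ^ j : ℕ) : ZMod P.d₁) * P.χ₂ ((p ^ j : ℕ) : ZMod P.d₂) *
                  (p : ℂ) ^ (-(j : ℂ) * (-s)))) *
      ((m : ℕ) : ℂ) ^ (-s)
    = ((corad m P.d₂ : ℕ) : ℂ) ^ (-s) *
      P.χ₂ ((corad m P.d₁ : ℕ) : ZMod P.d₂) * P.χ₁ ((corad m P.d₂ : ℕ) : ZMod P.d₁) *
      ∏ p ∈ m.primeFactors.filter (fun p => ¬ p ∣ P.d₂ * P.d₁),
        (1 + P.χ₂ (p : ZMod P.d₂) * P.χ₁ (p : ZMod P.d₁) / (p : ℂ))⁻¹ *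
          P.χ₂ (p : ZMod P.d₂) ^ (m.factorization p) *
          ((∑ j ∈ Finset.range (m.factorization p + 1),
              P.χ₂ ((p ^ j : ℕ) : ZMod P.d₂) * P.χ₁ ((p ^ j : ℕ) : ZMod P.d₁) *
                (p : ℂ) ^ (-(j : ℂ) * s)) -
            (p : ℂ) ^ (-(s + 1)) *
              ∑ j ∈ Finset.range (m.factorization p - 1),
                P.χ₂ ((p ^ j : ℕ) : ZMod P.d₂) * P.χ₁ ((p ^ j : ℕ) : ZMod P.d₁) *
                  (p : ℂ) ^ (-(j : ℂ) * s)) := by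
  haveI : NeZero P.d₁ := ⟨hd1.ne'⟩
  haveI : NeZero P.d₂ := ⟨hd2.ne'⟩
  have hm0 : m ≠ 0 := hm.ne'
  have hS2eq : (m.primeFactors.filter (fun p => ¬ p ∣ P.d₁)).filter (fun p => p ∣ P.d₂)
      = m.primeFactors.filter (fun p => p ∣ P.d₂) := by
    rw [Finset.filter_filter]
    refine Finset.filter_congr fun p hp => ?_
    have hpp := Nat.prime_of_mem_primeFactors hp
    constructor
    · exact fun h => h.2
    · refine fun h => ⟨fun h1 => hpp.ne_one (Nat.dvd_one.mp ?_), h⟩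
      exact hcop ▸ Nat.dvd_gcd h1 h
  have hS0eq : (m.primeFactors.filter (fun p => ¬ p ∣ P.d₁)).filter (fun p => ¬ p ∣ P.d₂)
      = m.primeFactors.filter (fun p => ¬ p ∣ P.d₁ * P.d₂) := by
    rw [Finset.filter_filter]
    refine Finset.filter_congr fun p hp => ?_
    have hpp := Nat.prime_of_mem_primeFactors hp
    rw [hpp.dvd_mul]
    tauto
  have hmprod : ((m : ℕ) : ℂ) ^ (-s)
      = ∏ p ∈ m.primeFactors, ((p ^ m.factorization p : ℕ) : ℂ) ^ (-s) := by
    conv_lhs => rw [← Nat.factorization_prod_pow_eq_self hm0]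
    rw [Nat.prod_factorization_eq_prod_primeFactors]
    exact prod_natCast_cpow _ _ _
  have hcorad1 : ((corad m P.d₁ : ℕ) : ℂ) ^ (-s)
      = ∏ p ∈ m.primeFactors.filter (fun p => p ∣ P.d₁),
          ((p ^ m.factorization p : ℕ) : ℂ) ^ (-s) := by
    rw [corad]; exact prod_natCast_cpow _ _ _
  have hcorad2 : ((corad m P.d₂ : ℕ) : ℂ) ^ (-s)
      = ∏ p ∈ m.primeFactors.filter (fun p => p ∣ P.d₂),
          ((p ^ m.factorization p : ℕ) : ℂ) ^ (-s) := by
    rw [corad]; exact prod_natCast_cpow _ _ _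
  have hsplit : ((m : ℕ) : ℂ) ^ (-s)
      = ((corad m P.d₁ : ℕ) : ℂ) ^ (-s) * ((corad m P.d₂ : ℕ) : ℂ) ^ (-s) *
        ∏ p ∈ m.primeFactors.filter (fun p => ¬ p ∣ P.d₁ * P.d₂),
          ((p ^ m.factorization p : ℕ) : ℂ) ^ (-s) := by
    rw [hmprod,
      ← Finset.prod_filter_mul_prod_filter_not m.primeFactors (fun p => p ∣ P.d₁),
      ← Finset.prod_filter_mul_prod_filter_not
        (m.primeFactors.filter (fun p => ¬ p ∣ P.d₁)) (fun p => p ∣ P.d₂),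
      hS2eq, hS0eq, hcorad1, hcorad2, mul_assoc]
  have hc1ne : ((corad m P.d₁ : ℕ) : ℂ) ^ s ≠ 0 := by
    have hpos : (corad m P.d₁ : ℕ) ≠ 0 := by
      rw [corad]
      exact (Finset.prod_pos (fun p hp => pow_pos
        (Nat.prime_of_mem_primeFactors (Finset.mem_of_mem_filter _ hp)).pos _)).ne'
    exact fun h => (Nat.cast_ne_zero.mpr hpos) ((Complex.cpow_eq_zero_iff _ _).mp h).1
  have hNF : ∏ p ∈ m.primeFactors.filter (fun p => ¬ p ∣ P.d₁ * P.d₂),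
        (((p ^ m.factorization p : ℕ) : ℂ) ^ (-s) *
          ((1 + P.χ₁ (p : ZMod P.d₁) * P.χ₂ (p : ZMod P.d₂) / (p : ℂ))⁻¹ *
            P.χ₁ (p : ZMod P.d₁) ^ (m.factorization p) *
            ((∑ j ∈ Finset.range (m.factorization p + 1),
                P.χ₁ ((p ^ j : ℕ) : ZMod P.d₁) * P.χ₂ ((p ^ j : ℕ) : ZMod P.d₂) *
                  (p : ℂ) ^ (-(j : ℂ) * (-s))) -
              (p : ℂ) ^ (-(-s + 1)) *
                ∑ j ∈ Finset.range (m.factorization p - 1),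
                  P.χ₁ ((p ^ j : ℕ) : ZMod P.d₁) * P.χ₂ ((p ^ j : ℕ) : ZMod P.d₂) *
                    (p : ℂ) ^ (-(j : ℂ) * (-s)))))
      = ∏ p ∈ m.primeFactors.filter (fun p => ¬ p ∣ P.d₁ * P.d₂),
        (1 + P.χ₂ (p : ZMod P.d₂) * P.χ₁ (p : ZMod P.d₁) / (p : ℂ))⁻¹ *
          P.χ₂ (p : ZMod P.d₂) ^ (m.factorization p) *
          ((∑ j ∈ Finset.range (m.factorization p + 1),
              P.χ₂ ((p ^ j : ℕ) : ZMod P.d₂) * P.χ₁ ((p ^ j : ℕ) : ZMod P.d₁) *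
                (p : ℂ) ^ (-(j : ℂ) * s)) -
            (p : ℂ) ^ (-(s + 1)) *
              ∑ j ∈ Finset.range (m.factorization p - 1),
                P.χ₂ ((p ^ j : ℕ) : ZMod P.d₂) * P.χ₁ ((p ^ j : ℕ) : ZMod P.d₁) *
                  (p : ℂ) ^ (-(j : ℂ) * s)) := by
    refine Finset.prod_congr rfl fun p hp => ?_
    rw [Finset.mem_filter] at hp
    have hpp := Nat.prime_of_mem_primeFactors hp.1
    have h12 : ¬ p ∣ P.d₁ ∧ ¬ p ∣ P.d₂ := by
      have := hp.2
      rw [hpp.dvd_mul] at this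
      tauto
    have ha : 1 ≤ m.factorization p :=
      (Nat.Prime.factorization_pos_of_dvd hpp hm0 (Nat.dvd_of_mem_primeFactors hp.1))
    exact perprime P hr1 hr2 hpp h12.1 h12.2 ha s
  have hcancel : ((corad m P.d₁ : ℕ) : ℂ) ^ s * ((corad m P.d₁ : ℕ) : ℂ) ^ (-s) = 1 := by
    rw [Complex.cpow_neg, mul_inv_cancel₀ hc1ne]
  have hNF2 := (Finset.prod_mul_distrib).symm.trans hNF
  rw [neg_neg, hsplit,
    show m.primeFactors.filter (fun p => ¬ p ∣ P.d₂ * P.d₁)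
        = m.primeFactors.filter (fun p => ¬ p ∣ P.d₁ * P.d₂) from by rw [mul_comm]]
  exact assemble _ _ _ _ _ _ _ _ hcancel hNF2

theorem statement_19 (P : Ctx) (hP : P.Good) :
    ∀ m : ℕ, 0 < m → ∀ s : ℂ,
      P.KllS m (-s) * (m : ℂ) ^ (-s) = P.swap.KllS m s := by
  obtain ⟨hd1, hd2, hcop, -, -, -, hr1, hr2⟩ := hP
  intro m hm s
  exact main_explicit P hd1 hd2 hcop hr1 hr2 m hm s

end EpsteinPaper
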